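/- Let 0 < ε ≤ 1/32, N ∈ ℕ with N ≥ 4, and θ ∈ ℝ with ε/N² ≤ θ ≤ 1/2. Then the number of pairs of integers (k, j) with N ≤ k ≤ 3N, 2N ≤ j ≤ 3N, and ε/4 < {θ · k(2j+k)} < 1 − ε/4 is at least N²/16. -/

import Mathlib

open Finset

lemma good_of_far (x δ : ℝ) (h : ∀ n : ℤ, δ < |x - n|) :
    δ < Int.fract x ∧ Int.fract x < 1 - δ := by
  have h0 := h ⌊x⌋
  have h1 := h (⌊x⌋ + 1)
  have hf : Int.fract x = x - ⌊x⌋ := rfl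
  have hnn : 0 ≤ Int.fract x := Int.fract_nonneg x
  have hlt : Int.fract x < 1 := Int.fract_lt_one x
  rw [hf] at hnn hlt
  constructor
  · rw [abs_of_nonneg hnn] at h0; rw [hf]; linarith
  · push_cast at h1
    rw [abs_of_nonpos (by linarith)] at h1
    rw [hf]; linarith

lemma near_of_bad (x δ : ℝ)
    (h : ¬(δ < Int.fract x ∧ Int.fract x < 1 - δ)) : ∃ n : ℤ, |x - n| ≤ δ := by
  have hf : Int.fract x = x - ⌊x⌋ := rfl
  have hnn : 0 ≤ Int.fract x := Int.fract_nonneg x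
  have hlt : Int.fract x < 1 := Int.fract_lt_one x
  rw [hf] at hnn hlt
  rcases not_and_or.1 h with h' | h'
  · push_neg at h'; rw [hf] at h'
    exact ⟨⌊x⌋, by rw [abs_of_nonneg hnn]; linarith⟩
  · push_neg at h'; rw [hf] at h'
    refine ⟨⌊x⌋ + 1, ?_⟩
    push_cast
    rw [abs_of_nonpos (by linarith)]
    linarith

/-- A set of integers, pairwise ≥ 2 apart, with diameter ≤ d, has ≤ d/2+1 elements. -/
lemma sep_card (A : Finset ℤ) (d : ℝ) (hd : 0 ≤ d)
    (hsep : ∀ x ∈ A, ∀ y ∈ A, x ≠ y → 2 ≤ |x - y|)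
    (hdiam : ∀ x ∈ A, ∀ y ∈ A, ((x : ℝ) - y) ≤ d) :
    (A.card : ℝ) ≤ d / 2 + 1 := by
  rcases A.eq_empty_or_nonempty with rfl | hne
  · simp; linarith
  · set m := A.min' hne with hm
    have hmmem : m ∈ A := A.min'_mem hne
    set f : ℤ → ℤ := fun t => (t - m) / 2 with hfdef
    have hinj : Set.InjOn f A := by
      intro x hx y hy hxy
      by_contra hne2
      have h2 := hsep x hx y hy hne2
      have hxm : m ≤ x := A.min'_le x hx
      have hym : m ≤ y := A.min'_le y hy
      rcases abs_cases (x - y) with ⟨he, _⟩ | ⟨he, _⟩ <;>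
        (rw [he] at h2; simp only [hfdef] at hxy; omega)
    have hcard : A.card = (A.image f).card := (Finset.card_image_of_injOn hinj).symm
    have hsub : A.image f ⊆ Finset.Icc 0 ⌊d / 2⌋ := by
      intro z hz
      obtain ⟨t, ht, rfl⟩ := Finset.mem_image.1 hz
      have htm : m ≤ t := A.min'_le t ht
      have hdt : ((t : ℝ) - m) ≤ d := hdiam t ht m hmmem
      have h2f : 2 * (f t) ≤ t - m := by simp only [hfdef]; omega
      have hf0 : 0 ≤ f t := by simp only [hfdef]; omega
      refine Finset.mem_Icc.2 ⟨hf0, Int.le_floor.2 ?_⟩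
      have : ((2 * f t : ℤ) : ℝ) ≤ (t : ℝ) - m := by exact_mod_cast (by push_cast; linarith)
      push_cast at this ⊢
      linarith
    have hc2 : (A.image f).card ≤ (Finset.Icc (0:ℤ) ⌊d / 2⌋).card := Finset.card_le_card hsub
    have hfl : (0:ℤ) ≤ ⌊d / 2⌋ := Int.floor_nonneg.2 (by linarith)
    have hc3 : ((Finset.Icc (0:ℤ) ⌊d / 2⌋).card : ℝ) ≤ d / 2 + 1 := by
      rw [Int.card_Icc]
      have h4 : (⌊d / 2⌋ + 1 - 0).toNat = (⌊d/2⌋ + 1).toNat := by ring_nf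
      rw [h4]
      have h5 : ((⌊d/2⌋ + 1).toNat : ℤ) = ⌊d/2⌋ + 1 := Int.toNat_of_nonneg (by omega)
      have h6 : ((⌊d/2⌋ + 1).toNat : ℝ) = ((⌊d/2⌋ : ℝ) + 1) := by exact_mod_cast congrArg (fun z : ℤ => (z:ℝ)) h5
      rw [h6]
      have := Int.floor_le (d/2)
      linarith
    rw [hcard]
    calc ((A.image f).card : ℝ) ≤ ((Finset.Icc (0:ℤ) ⌊d / 2⌋).card : ℝ) := by exact_mod_cast hc2
      _ ≤ d / 2 + 1 := hc3

/-- If among any two consecutive integers in [a,b] at least one satisfies P,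
then at least (b-a)/2 of them satisfy P. -/
lemma no_two_adj (a b : ℤ) (hab : a ≤ b) (P : ℤ → Prop) [DecidablePred P]
    (h : ∀ t : ℤ, a ≤ t → t + 1 ≤ b → P t ∨ P (t + 1)) :
    ((b : ℝ) - a) / 2 ≤ (((Finset.Icc a b).filter P).card : ℝ) := by
  set Q := (Finset.Icc a b).filter (fun t => ¬ P t) with hQ
  have hsep : ∀ x ∈ Q, ∀ y ∈ Q, x ≠ y → 2 ≤ |x - y| := by
    intro x hx y hy hxy
    simp only [hQ, Finset.mem_filter, Finset.mem_Icc] at hx hy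
    by_contra hc
    push_neg at hc
    rcases abs_cases (x - y) with ⟨he, _⟩ | ⟨he, _⟩ <;> rw [he] at hc
    · -- x - y < 2, x ≥ y ⇒ x = y or x = y+1
      have : x = y + 1 ∨ y = x + 1 ∨ x = y := by omega
      rcases this with rfl | h' | rfl
      · rcases h y hy.1.1 (by omega) with hp | hp
        · exact hy.2 hp
        · exact hx.2 hp
      · subst h'
        rcases h x hx.1.1 (by omega) with hp | hp
        · exact hx.2 hp
        · exact hy.2 hp
      · exact hxy rfl
    · have : x = y + 1 ∨ y = x + 1 ∨ x = y := by omega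
      rcases this with rfl | h' | rfl
      · rcases h y hy.1.1 (by omega) with hp | hp
        · exact hy.2 hp
        · exact hx.2 hp
      · subst h'
        rcases h x hx.1.1 (by omega) with hp | hp
        · exact hx.2 hp
        · exact hy.2 hp
      · exact hxy rfl
  have hdiam : ∀ x ∈ Q, ∀ y ∈ Q, ((x : ℝ) - y) ≤ ((b : ℝ) - a) := by
    intro x hx y hy
    simp only [hQ, Finset.mem_filter, Finset.mem_Icc] at hx hy
    have h1 : (x : ℝ) ≤ b := by exact_mod_cast hx.1.2
    have h2 : (a : ℝ) ≤ y := by exact_mod_cast hy.1.1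
    linarith
  have hba : (0:ℝ) ≤ (b : ℝ) - a := by
    have h9 : (a:ℝ) ≤ b := by exact_mod_cast hab
    linarith
  have hQcard : (Q.card : ℝ) ≤ ((b : ℝ) - a) / 2 + 1 :=
    sep_card Q _ hba hsep hdiam
  have htot : ((Finset.Icc a b).filter P).card + Q.card = (Finset.Icc a b).card :=
    Finset.card_filter_add_card_filter_not (p := P)
  have hIcc : ((Finset.Icc a b).card : ℝ) = (b : ℝ) - a + 1 := by
    rw [Int.card_Icc]
    have h5 : ((b + 1 - a).toNat : ℤ) = b + 1 - a := Int.toNat_of_nonneg (by omega)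
    have : ((b + 1 - a).toNat : ℝ) = ((b:ℝ) + 1 - (a:ℝ)) := by exact_mod_cast congrArg (fun z : ℤ => (z:ℝ)) h5
    rw [this]; ring
  have : (((Finset.Icc a b).filter P).card : ℝ) + (Q.card : ℝ) = (b : ℝ) - a + 1 := by
    rw [← hIcc]; exact_mod_cast congrArg (Nat.cast (R := ℝ)) htot
  linarith

/-- At least N odd integers in [N, 3N]. -/
lemma odd_card_lower (N : ℕ) (hN : 1 ≤ N) :
    (N : ℝ) ≤ (((Finset.Icc (N:ℤ) (3*N)).filter (fun k => k % 2 = 1)).card : ℝ) := by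
  set a : ℤ := if (N:ℤ) % 2 = 1 then (N:ℤ) else (N:ℤ)+1 with ha
  have key : (N : ℕ) ≤ ((Finset.Icc (N:ℤ) (3*N)).filter (fun k => k % 2 = 1)).card := by
    have := Finset.card_le_card_of_injOn (f := fun i : ℕ => a + 2 * i)
      (s := Finset.range N)
      (t := (Finset.Icc (N:ℤ) (3*N)).filter (fun k => k % 2 = 1)) ?_ ?_
    · simpa using this
    · intro i hi
      simp only [Finset.mem_coe, Finset.mem_range] at hi
      simp only [Finset.mem_coe, Finset.mem_filter, Finset.mem_Icc]
      have hiz : (i : ℤ) ≤ (N:ℤ) - 1 := by exact_mod_cast Nat.le_sub_one_of_lt hi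
      have hiz0 : (0:ℤ) ≤ (i:ℤ) := Int.ofNat_nonneg i
      have hN' : (1:ℤ) ≤ (N:ℤ) := by exact_mod_cast hN
      constructor
      · constructor <;> (simp only [ha]; split <;> omega)
      · simp only [ha]; split <;> omega
    · intro x _ y _ hxy
      simp only at hxy
      omega
  exact_mod_cast key

lemma m_bounds (N : ℕ) (hN : 4 ≤ N) (k j : ℤ) (hk1 : (N:ℤ) ≤ k) (hk2 : k ≤ 3*N)
    (hj1 : 2*(N:ℤ) ≤ j) (hj2 : j ≤ 3*N) :
    5*(N:ℝ)^2 ≤ ((k*(2*j+k) : ℤ) : ℝ) ∧ ((k*(2*j+k) : ℤ) : ℝ) ≤ 27*(N:ℝ)^2 := by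
  have hk1' : (N:ℝ) ≤ (k:ℝ) := by exact_mod_cast hk1
  have hk2' : (k:ℝ) ≤ 3*(N:ℝ) := by exact_mod_cast hk2
  have hj1' : 2*(N:ℝ) ≤ (j:ℝ) := by exact_mod_cast hj1
  have hj2' : (j:ℝ) ≤ 3*(N:ℝ) := by exact_mod_cast hj2
  have hN' : (4:ℝ) ≤ (N:ℝ) := by exact_mod_cast hN
  have hm : ((k*(2*j+k) : ℤ) : ℝ) = (k:ℝ)*(2*(j:ℝ)+(k:ℝ)) := by push_cast; ring
  rw [hm]
  constructor <;> nlinarith [mul_le_mul hk1' hj1' (by linarith) (by linarith)]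

lemma pairs_lower (K J : Finset ℤ) (Gp : ℤ × ℤ → Prop) [DecidablePred Gp]
    (K' : Finset ℤ) (hK' : K' ⊆ K) (F : ℤ → Finset ℤ) (hF : ∀ k ∈ K', F k ⊆ J)
    (hgood : ∀ k ∈ K', ∀ j ∈ F k, Gp (k, j)) (B : ℝ)
    (hB : ∀ k ∈ K', B ≤ ((F k).card : ℝ)) :
    (K'.card : ℝ) * B ≤ (((K ×ˢ J).filter Gp).card : ℝ) := by
  classical
  set T := K'.biUnion (fun k => (F k).image (fun j => ((k, j) : ℤ × ℤ))) with hT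
  have hTsub : T ⊆ (K ×ˢ J).filter Gp := by
    intro p hp
    simp only [hT, Finset.mem_biUnion, Finset.mem_image] at hp
    obtain ⟨k, hk, j, hj, rfl⟩ := hp
    simp only [Finset.mem_filter, Finset.mem_product]
    exact ⟨⟨hK' hk, hF k hk hj⟩, hgood k hk j hj⟩
  have hdisj : ∀ x ∈ K', ∀ y ∈ K', x ≠ y →
      Disjoint ((F x).image (fun j => ((x, j) : ℤ × ℤ))) ((F y).image (fun j => ((y, j) : ℤ × ℤ))) := by
    intro x _ y _ hxy
    rw [Finset.disjoint_left]
    intro p hp hp'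
    simp only [Finset.mem_image] at hp hp'
    obtain ⟨j, _, rfl⟩ := hp
    obtain ⟨j', _, he⟩ := hp'
    exact hxy (congrArg Prod.fst he).symm
  have hcardT : T.card = ∑ k ∈ K', ((F k).image (fun j => ((k, j) : ℤ × ℤ))).card :=
    Finset.card_biUnion hdisj
  have hcardim : ∀ k ∈ K', ((F k).image (fun j => ((k, j) : ℤ × ℤ))).card = (F k).card := by
    intro k _
    exact Finset.card_image_of_injOn (fun a _ b _ hab => congrArg Prod.snd hab)
  have hsum : (K'.card : ℝ) * B ≤ (T.card : ℝ) := by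
    rw [hcardT]
    push_cast
    rw [Finset.sum_congr rfl (fun k hk => by rw [hcardim k hk])]
    calc (K'.card : ℝ) * B = ∑ _k ∈ K', B := by rw [Finset.sum_const]; ring
      _ ≤ ∑ k ∈ K', ((F k).card : ℝ) := Finset.sum_le_sum (fun k hk => hB k hk)
      _ = ∑ k ∈ K', (((F k).card : ℕ) : ℝ) := rfl
  have := Finset.card_le_card hTsub
  calc (K'.card : ℝ) * B ≤ (T.card : ℝ) := hsum
    _ ≤ _ := by exact_mod_cast this

/-- symmetric version: fix j's, count k's. -/
lemma pairs_lower' (K J : Finset ℤ) (Gp : ℤ × ℤ → Prop) [DecidablePred Gp]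
    (J' : Finset ℤ) (hJ' : J' ⊆ J) (F : ℤ → Finset ℤ) (hF : ∀ j ∈ J', F j ⊆ K)
    (hgood : ∀ j ∈ J', ∀ k ∈ F j, Gp (k, j)) (B : ℝ)
    (hB : ∀ j ∈ J', B ≤ ((F j).card : ℝ)) :
    (J'.card : ℝ) * B ≤ (((K ×ˢ J).filter Gp).card : ℝ) := by
  classical
  set T := J'.biUnion (fun j => (F j).image (fun k => ((k, j) : ℤ × ℤ))) with hT
  have hTsub : T ⊆ (K ×ˢ J).filter Gp := by
    intro p hp
    simp only [hT, Finset.mem_biUnion, Finset.mem_image] at hp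
    obtain ⟨j, hj, k, hk, rfl⟩ := hp
    simp only [Finset.mem_filter, Finset.mem_product]
    exact ⟨⟨hF j hj hk, hJ' hj⟩, hgood j hj k hk⟩
  have hdisj : ∀ x ∈ J', ∀ y ∈ J', x ≠ y →
      Disjoint ((F x).image (fun k => ((k, x) : ℤ × ℤ))) ((F y).image (fun k => ((k, y) : ℤ × ℤ))) := by
    intro x _ y _ hxy
    rw [Finset.disjoint_left]
    intro p hp hp'
    simp only [Finset.mem_image] at hp hp'
    obtain ⟨k, _, rfl⟩ := hp
    obtain ⟨k', _, he⟩ := hp'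
    exact hxy (congrArg Prod.snd he).symm
  have hcardT : T.card = ∑ j ∈ J', ((F j).image (fun k => ((k, j) : ℤ × ℤ))).card :=
    Finset.card_biUnion hdisj
  have hcardim : ∀ j ∈ J', ((F j).image (fun k => ((k, j) : ℤ × ℤ))).card = (F j).card := by
    intro j _
    exact Finset.card_image_of_injOn (fun a _ b _ hab => congrArg Prod.fst hab)
  have hsum : (J'.card : ℝ) * B ≤ (T.card : ℝ) := by
    rw [hcardT]
    push_cast
    rw [Finset.sum_congr rfl (fun j hj => by rw [hcardim j hj])]
    calc (J'.card : ℝ) * B = ∑ _j ∈ J', B := by rw [Finset.sum_const]; ring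
      _ ≤ ∑ j ∈ J', ((F j).card : ℝ) := Finset.sum_le_sum (fun j hj => hB j hj)
      _ = ∑ j ∈ J', (((F j).card : ℕ) : ℝ) := rfl
  have := Finset.card_le_card hTsub
  calc (J'.card : ℝ) * B ≤ (T.card : ℝ) := hsum
    _ ≤ _ := by exact_mod_cast this

/-- For a fixed k whose rotation 2ψk stays ε/2 away from integers,
at least N/2 of the j ∈ [2N,3N] are good. -/
lemma jcount (N : ℕ) (hN : 4 ≤ N) (ε ψ c : ℝ) (k : ℤ) (Gk : ℤ → Prop) [DecidablePred Gk]
    (hbadnear : ∀ j : ℤ, 2*(N:ℤ) ≤ j → j ≤ 3*N → ¬ Gk j →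
      ∃ n : ℤ, |ψ * ((k*(2*j+k) : ℤ) : ℝ) - ((n:ℝ) + c)| ≤ ε/4)
    (hk : ∀ n : ℤ, ε/2 < |2*ψ*(k:ℝ) - (n:ℝ)|) :
    ((N:ℝ))/2 ≤ (((Finset.Icc (2*(N:ℤ)) (3*N)).filter Gk).card : ℝ) := by
  have hab : 2*(N:ℤ) ≤ 3*N := by omega
  have h := no_two_adj (2*(N:ℤ)) (3*N) hab Gk ?_
  · have : ((3*(N:ℤ) : ℝ) - (2*(N:ℤ) : ℝ)) = (N:ℝ) := by push_cast; ring
    calc ((N:ℝ))/2 = (((3*N:ℤ):ℝ) - ((2*N:ℤ):ℝ))/2 := by push_cast; ring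
      _ ≤ _ := by exact_mod_cast h
  · intro t ht1 ht2
    by_contra hc
    push_neg at hc
    obtain ⟨n₁, hn₁⟩ := hbadnear t ht1 (by omega) hc.1
    obtain ⟨n₂, hn₂⟩ := hbadnear (t+1) (by omega) (by omega) hc.2
    have hdiff : ψ * ((k*(2*(t+1)+k) : ℤ) : ℝ) - ψ * ((k*(2*t+k) : ℤ) : ℝ) = 2*ψ*(k:ℝ) := by
      push_cast; ring
    have key : |2*ψ*(k:ℝ) - ((n₂ - n₁ : ℤ) : ℝ)| ≤ ε/2 := by
      have e : 2*ψ*(k:ℝ) - ((n₂ - n₁ : ℤ) : ℝ) =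
          (ψ * ((k*(2*(t+1)+k) : ℤ) : ℝ) - ((n₂:ℝ) + c)) -
          (ψ * ((k*(2*t+k) : ℤ) : ℝ) - ((n₁:ℝ) + c)) := by push_cast; ring
      rw [e]
      calc |_ - _| ≤ |ψ * ((k*(2*(t+1)+k) : ℤ) : ℝ) - ((n₂:ℝ) + c)| +
            |ψ * ((k*(2*t+k) : ℤ) : ℝ) - ((n₁:ℝ) + c)| := abs_sub _ _
        _ ≤ ε/4 + ε/4 := add_le_add hn₂ hn₁
        _ = ε/2 := by ring
    exact absurd key (not_le.2 (hk (n₂ - n₁)))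

section
variable (N : ℕ)

lemma b1count (N : ℕ) (hN : 4 ≤ N) (ε ψ c : ℝ) (hε : 0 < ε) (hψ : 0 < ψ) (j : ℤ)
    (hj1 : 2*(N:ℤ) ≤ j) (hj2 : j ≤ 3*N) (Gk : ℤ → Prop) [DecidablePred Gk]
    (hbadnear : ∀ k : ℤ, (N:ℤ) ≤ k → k ≤ 3*N → k % 2 = 1 → ¬ Gk k →
      ∃ n : ℤ, |ψ * ((k*(2*j+k) : ℤ) : ℝ) - ((n:ℝ) + c)| ≤ ε/4) :
    (N:ℝ) - (22*ψ*(N:ℝ)^2 + ε/2 + 1) * (ε/(24*ψ*(N:ℝ)) + 1)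
      ≤ ((((Finset.Icc (N:ℤ) (3*N)).filter (fun k => k % 2 = 1)).filter Gk).card : ℝ) := by
  classical
  have hN0 : (0:ℝ) < (N:ℝ) := by positivity
  set oddK := (Finset.Icc (N:ℤ) (3*N)).filter (fun k => k % 2 = 1) with hoddK
  set bad := oddK.filter (fun k => ¬ Gk k) with hbad
  have htot : (oddK.filter Gk).card + bad.card = oddK.card :=
    Finset.card_filter_add_card_filter_not (p := Gk)
  have hoddN : (N:ℝ) ≤ (oddK.card : ℝ) := odd_card_lower N (by omega)
  set n₁ : ℤ := ⌈5*ψ*(N:ℝ)^2 - c - ε/4⌉ with hn₁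
  set n₂ : ℤ := ⌊27*ψ*(N:ℝ)^2 - c + ε/4⌋ with hn₂
  set T : ℤ → Finset ℤ := fun n => oddK.filter (fun k => |ψ * ((k*(2*j+k) : ℤ) : ℝ) - ((n:ℝ) + c)| ≤ ε/4) with hT
  have hsub : bad ⊆ (Finset.Icc n₁ n₂).biUnion T := by
    intro k hk
    simp only [hbad, hoddK, Finset.mem_filter, Finset.mem_Icc] at hk
    obtain ⟨⟨⟨hk1, hk2⟩, hk3⟩, hk4⟩ := hk
    obtain ⟨n, hn⟩ := hbadnear k hk1 hk2 hk3 hk4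
    have hm := m_bounds N hN k j hk1 hk2 hj1 hj2
    have habs := abs_le.1 hn
    have hml : ψ * (5*(N:ℝ)^2) ≤ ψ * ((k*(2*j+k) : ℤ) : ℝ) :=
      mul_le_mul_of_nonneg_left hm.1 (le_of_lt hψ)
    have hmu : ψ * ((k*(2*j+k) : ℤ) : ℝ) ≤ ψ * (27*(N:ℝ)^2) :=
      mul_le_mul_of_nonneg_left hm.2 (le_of_lt hψ)
    refine Finset.mem_biUnion.2 ⟨n, Finset.mem_Icc.2 ⟨?_, ?_⟩, ?_⟩
    · rw [hn₁]
      apply Int.ceil_le.2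
      linarith
    · rw [hn₂]
      apply Int.le_floor.2
      linarith
    · simp only [hT, Finset.mem_filter, hoddK, Finset.mem_Icc]
      exact ⟨⟨⟨hk1, hk2⟩, hk3⟩, hn⟩
  have hper : ∀ n ∈ Finset.Icc n₁ n₂, ((T n).card : ℝ) ≤ ε/(24*ψ*(N:ℝ)) + 1 := by
    intro n _
    have hd0 : (0:ℝ) ≤ ε/(12*ψ*(N:ℝ)) := by positivity
    have := sep_card (T n) (ε/(12*ψ*(N:ℝ))) hd0 ?_ ?_
    · calc ((T n).card : ℝ) ≤ (ε/(12*ψ*(N:ℝ)))/2 + 1 := this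
        _ = ε/(24*ψ*(N:ℝ)) + 1 := by ring
    · intro x hx y hy hxy
      simp only [hT, hoddK, Finset.mem_filter, Finset.mem_Icc] at hx hy
      have h1 := hx.1.2; have h2 := hy.1.2
      rcases abs_cases (x - y) with ⟨he, _⟩ | ⟨he, _⟩ <;> omega
    · intro x hx y hy
      simp only [hT, hoddK, Finset.mem_filter, Finset.mem_Icc] at hx hy
      rcases le_or_gt x y with hle | hlt
      · have : ((x:ℝ) - y) ≤ 0 := by
          have : (x:ℝ) ≤ y := by exact_mod_cast hle
          linarith
        linarith
      · -- y < x
        have habsx := abs_le.1 hx.2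
        have habsy := abs_le.1 hy.2
        have hdm : ψ * ((x*(2*j+x) : ℤ) : ℝ) - ψ * ((y*(2*j+y) : ℤ) : ℝ) ≤ ε/2 := by linarith
        have hfac : ((x*(2*j+x) : ℤ) : ℝ) - ((y*(2*j+y) : ℤ) : ℝ)
            = ((x:ℝ) - y) * (2*(j:ℝ) + x + y) := by push_cast; ring
        have hge : 6*(N:ℝ)*((x:ℝ) - y) ≤ ((x:ℝ) - y) * (2*(j:ℝ) + x + y) := by
          have hxy1 : (1:ℝ) ≤ (x:ℝ) - y := by
            have h7 : y + 1 ≤ x := hlt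
            have h8 : ((y + 1 : ℤ):ℝ) ≤ ((x:ℤ):ℝ) := by exact_mod_cast h7
            push_cast at h8; linarith
          have hsum : 6*(N:ℝ) ≤ 2*(j:ℝ) + x + y := by
            have hxx : (N:ℝ) ≤ (x:ℝ) := by exact_mod_cast hx.1.1.1
            have hyy : (N:ℝ) ≤ (y:ℝ) := by exact_mod_cast hy.1.1.1
            have hjj : 2*(N:ℝ) ≤ (j:ℝ) := by exact_mod_cast hj1
            linarith
          nlinarith
        have hmul : ψ * (6*(N:ℝ)*((x:ℝ) - y)) ≤ ε/2 := by
          have h6 : ψ * (((x*(2*j+x) : ℤ) : ℝ) - ((y*(2*j+y) : ℤ) : ℝ)) ≤ ε/2 := by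
            rw [mul_sub]; linarith
          rw [hfac] at h6
          nlinarith [mul_le_mul_of_nonneg_left hge (le_of_lt hψ)]
        rw [le_div_iff₀ (by positivity)]
        nlinarith
  have hIcc : ((Finset.Icc n₁ n₂).card : ℝ) ≤ 22*ψ*(N:ℝ)^2 + ε/2 + 1 := by
    rcases le_or_gt n₁ n₂ with hle | hlt
    · rw [Int.card_Icc]
      have h5 : ((n₂ + 1 - n₁).toNat : ℤ) = n₂ + 1 - n₁ := Int.toNat_of_nonneg (by omega)
      have h6 : ((n₂ + 1 - n₁).toNat : ℝ) = (n₂:ℝ) + 1 - n₁ := by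
        exact_mod_cast congrArg (fun z : ℤ => (z:ℝ)) h5
      rw [h6]
      have hc1 := Int.le_ceil (5*ψ*(N:ℝ)^2 - c - ε/4)
      have hc2 := Int.floor_le (27*ψ*(N:ℝ)^2 - c + ε/4)
      rw [← hn₁] at hc1; rw [← hn₂] at hc2
      linarith
    · rw [Finset.Icc_eq_empty (by omega)]
      simp
      positivity
  have hbiu : (bad.card : ℝ) ≤ ((Finset.Icc n₁ n₂).card : ℝ) * (ε/(24*ψ*(N:ℝ)) + 1) := by
    have h1 : bad.card ≤ ((Finset.Icc n₁ n₂).biUnion T).card := Finset.card_le_card hsub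
    have h2 : ((Finset.Icc n₁ n₂).biUnion T).card ≤ ∑ n ∈ Finset.Icc n₁ n₂, (T n).card :=
      Finset.card_biUnion_le
    have h3 : ((∑ n ∈ Finset.Icc n₁ n₂, (T n).card : ℕ) : ℝ)
        ≤ ((Finset.Icc n₁ n₂).card : ℝ) * (ε/(24*ψ*(N:ℝ)) + 1) := by
      push_cast
      calc ∑ n ∈ Finset.Icc n₁ n₂, ((T n).card : ℝ)
          ≤ ∑ _n ∈ Finset.Icc n₁ n₂, (ε/(24*ψ*(N:ℝ)) + 1) := Finset.sum_le_sum hper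
        _ = ((Finset.Icc n₁ n₂).card : ℝ) * (ε/(24*ψ*(N:ℝ)) + 1) := by
            rw [Finset.sum_const]; ring
    calc (bad.card : ℝ) ≤ ((∑ n ∈ Finset.Icc n₁ n₂, (T n).card : ℕ) : ℝ) := by
          exact_mod_cast le_trans h1 h2
      _ ≤ _ := h3
  have hfinal : (bad.card : ℝ) ≤ (22*ψ*(N:ℝ)^2 + ε/2 + 1) * (ε/(24*ψ*(N:ℝ)) + 1) := by
    have hB0 : (0:ℝ) ≤ ε/(24*ψ*(N:ℝ)) + 1 := by positivity
    calc (bad.card : ℝ) ≤ ((Finset.Icc n₁ n₂).card : ℝ) * (ε/(24*ψ*(N:ℝ)) + 1) := hbiu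
      _ ≤ (22*ψ*(N:ℝ)^2 + ε/2 + 1) * (ε/(24*ψ*(N:ℝ)) + 1) :=
          mul_le_mul_of_nonneg_right hIcc hB0
  have hcast : ((oddK.filter Gk).card : ℝ) + (bad.card : ℝ) = (oddK.card : ℝ) := by
    exact_mod_cast congrArg (Nat.cast (R := ℝ)) htot
  linarith

end

lemma b1numeric (N ψ ε : ℝ) (hN4 : 4 ≤ N) (hε : 0 < ε) (hε' : ε ≤ 1/32) (hψpos : 0 < ψ)
    (hu1 : 1 < ψ * (60*N^2)) (hu2 : ψ * (48*N) ≤ 1) :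
    (22*ψ*N^2 + ε/2 + 1) * (ε/(24*ψ*N) + 1) ≤ 7*N/8 := by
  have hN0 : (0:ℝ) < N := by linarith
  have h24 : (0:ℝ) < 24*ψ*N := by positivity
  have hre : ε/(24*ψ*N) + 1 = (ε + 24*ψ*N)/(24*ψ*N) := by field_simp
  rw [hre, mul_div_assoc' _ _ _, div_le_iff₀ h24]
  have hpn2 : (0:ℝ) < ψ*N^2 := by positivity
  have t1 : 22*ε*ψ*N^2 ≤ (11/16)*(ψ*N^2) := by nlinarith
  have t2 : 528*ψ^2*N^3 ≤ 11*(ψ*N^2) := by nlinarith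
  have t3 : ε ≤ (15/8)*(ψ*N^2) := by nlinarith
  have t4 : ε^2/2 ≤ (15/512)*(ψ*N^2) := by nlinarith
  have t5 : 12*ε*ψ*N ≤ (3/32)*(ψ*N^2) := by nlinarith [mul_pos hψpos hN0]
  have t6 : 24*ψ*N ≤ 6*(ψ*N^2) := by nlinarith [mul_pos hψpos hN0]
  nlinarith [t1, t2, t3, t4, t5, t6]

lemma b3numeric (N ψ ε : ℝ) (hN4 : 4 ≤ N) (hε : 0 < ε) (hε' : ε ≤ 1/32) (hψpos : 0 < ψ)
    (hψε : ψ ≤ ε/2) (huN : 8*ε ≤ ψ*N) :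
    (6*ψ*N + ε/2) * (ε/(4*ψ) + 1) ≤ N/2 := by
  have hN0 : (0:ℝ) < N := by linarith
  have h4ψ : (0:ℝ) < 4*ψ := by linarith
  have hre : ε/(4*ψ) + 1 = (ε + 4*ψ)/(4*ψ) := by field_simp
  rw [hre, mul_div_assoc' _ _ _, div_le_iff₀ h4ψ]
  have hpn : (0:ℝ) < ψ*N := by positivity
  have t1 : 6*ε*ψ*N ≤ (3/16)*(ψ*N) := by nlinarith
  have t2 : 24*ψ^2*N ≤ (3/8)*(ψ*N) := by nlinarith
  have t3 : ε^2/2 ≤ (1/512)*(ψ*N) := by nlinarith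
  have t4 : 2*ε*ψ ≤ (1/64)*(ψ*N) := by nlinarith
  nlinarith [t1, t2, t3, t4]

lemma odd_m (k j : ℤ) (hk : k % 2 = 1) : ∃ t : ℤ, k*(2*j+k) = 2*t+1 := by
  obtain ⟨a, ha⟩ : ∃ a, k = 2*a+1 := ⟨(k-1)/2, by omega⟩
  exact ⟨2*a*j + 2*a*a + 2*a + j, by rw [ha]; ring⟩

set_option maxHeartbeats 4000000 in
open scoped Classical in
/-- Lemma A.4: for `ε/N² ≤ θ ≤ 1/2`, at least `N²/16` of the pairs `(k,j)` with
`N ≤ k ≤ 3N`, `2N ≤ j ≤ 3N` satisfy `ε/4 < {θ·k(2j+k)} < 1 - ε/4`. -/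
theorem stmt8 (N : ℕ) (hN : 4 ≤ N) (ε : ℝ) (hε : 0 < ε) (hε' : ε ≤ 1 / 32)
    (θ : ℝ) (hθ : ε / (N : ℝ) ^ 2 ≤ θ) (hθ' : θ ≤ 1 / 2) :
    (N : ℝ) ^ 2 / 16 ≤
      ({p : ℤ × ℤ | (N : ℤ) ≤ p.1 ∧ p.1 ≤ 3 * N ∧ 2 * (N : ℤ) ≤ p.2 ∧ p.2 ≤ 3 * N ∧
        ε / 4 < Int.fract (θ * ((p.1 * (2 * p.2 + p.1) : ℤ) : ℝ)) ∧
        Int.fract (θ * ((p.1 * (2 * p.2 + p.1) : ℤ) : ℝ)) < 1 - ε / 4}.ncard : ℝ) := by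
  have hN0 : (0:ℝ) < (N:ℝ) := by positivity
  have hN4 : (4:ℝ) ≤ (N:ℝ) := by exact_mod_cast hN
  have hθ0 : 0 < θ := lt_of_lt_of_le (by positivity) hθ
  set K := Finset.Icc (N:ℤ) (3*(N:ℤ)) with hK
  set J := Finset.Icc (2*(N:ℤ)) (3*(N:ℤ)) with hJ
  set Gp : ℤ × ℤ → Prop := fun p =>
    ε / 4 < Int.fract (θ * ((p.1 * (2 * p.2 + p.1) : ℤ) : ℝ)) ∧
    Int.fract (θ * ((p.1 * (2 * p.2 + p.1) : ℤ) : ℝ)) < 1 - ε / 4 with hGp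
  have hseteq : {p : ℤ × ℤ | (N : ℤ) ≤ p.1 ∧ p.1 ≤ 3 * N ∧ 2 * (N : ℤ) ≤ p.2 ∧ p.2 ≤ 3 * N ∧
        ε / 4 < Int.fract (θ * ((p.1 * (2 * p.2 + p.1) : ℤ) : ℝ)) ∧
        Int.fract (θ * ((p.1 * (2 * p.2 + p.1) : ℤ) : ℝ)) < 1 - ε / 4}
      = ↑((K ×ˢ J).filter Gp) := by
    ext p
    simp only [Set.mem_setOf_eq, Finset.coe_filter, Finset.mem_product, Finset.mem_Icc, hK, hJ,
      hGp, Set.mem_setOf_eq]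
    tauto
  rw [hseteq, Set.ncard_coe_finset]
  have hJcard : (J.card : ℝ) = (N:ℝ) + 1 := by
    rw [hJ, Int.card_Icc]
    rw [show (3*(N:ℤ) + 1 - 2*(N:ℤ)) = (N:ℤ) + 1 by ring]
    rw [show ((N:ℤ)+1).toNat = N + 1 by omega]
    push_cast; ring
  by_cases hcase : ∀ n : ℤ, ε < |2*θ - (n:ℝ)|
  · -- Case I
    set P : ℤ → Prop := fun k => ∀ n : ℤ, ε/2 < |2*θ*(k:ℝ) - (n:ℝ)| with hP
    have hPcard : (N:ℝ) ≤ ((K.filter P).card : ℝ) := by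
      have h := no_two_adj (N:ℤ) (3*(N:ℤ)) (by omega) P ?_
      · rw [← hK] at h
        push_cast at h
        linarith
      · intro t ht1 ht2
        by_contra hc
        push_neg at hc
        obtain ⟨hc1, hc2⟩ := hc
        simp only [hP] at hc1 hc2
        push_neg at hc1 hc2
        obtain ⟨n₁, hn₁⟩ := hc1
        obtain ⟨n₂, hn₂⟩ := hc2
        push_cast at hn₂
        have key : |2*θ - ((n₂ - n₁ : ℤ):ℝ)| ≤ ε := by
          have e : 2*θ - ((n₂ - n₁ : ℤ):ℝ) =
              (2*θ*((t:ℝ)+1) - (n₂:ℝ)) - (2*θ*(t:ℝ) - (n₁:ℝ)) := by push_cast; ring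
          rw [e]
          calc |_ - _| ≤ |2*θ*((t:ℝ)+1) - (n₂:ℝ)| + |2*θ*(t:ℝ) - (n₁:ℝ)| := abs_sub _ _
            _ ≤ ε/2 + ε/2 := add_le_add hn₂ hn₁
            _ = ε := by ring
        exact absurd key (not_le.2 (hcase (n₂ - n₁)))
    have hjc : ∀ k ∈ K.filter P, (N:ℝ)/2 ≤ ((J.filter (fun j => Gp (k, j))).card : ℝ) := by
      intro k hk
      simp only [Finset.mem_filter, hP] at hk
      exact jcount N hN ε θ 0 k (fun j => Gp (k, j))
        (fun j hj1 hj2 hbad => by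
          simp only [hGp] at hbad
          obtain ⟨n, hn⟩ := near_of_bad (θ * ((k*(2*j+k) : ℤ) : ℝ)) (ε/4) hbad
          exact ⟨n, by simpa using hn⟩)
        hk.2
    have hmain := pairs_lower K J Gp (K.filter P) (Finset.filter_subset _ _)
      (fun k => J.filter (fun j => Gp (k, j)))
      (fun k _ => Finset.filter_subset _ _)
      (fun k _ j hj => (Finset.mem_filter.1 hj).2)
      ((N:ℝ)/2) hjc
    have hge : (N:ℝ) * ((N:ℝ)/2) ≤ (((K.filter P).card : ℝ)) * ((N:ℝ)/2) :=
      mul_le_mul_of_nonneg_right hPcard (by positivity)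
    nlinarith
  · -- Case II/III
    push_neg at hcase
    obtain ⟨n₀, hn₀⟩ := hcase
    have hn₀01 : (2*θ ≤ ε) ∨ (1 - ε ≤ 2*θ) := by
      have habs := abs_le.1 hn₀
      have hb : (0:ℤ) ≤ n₀ ∧ n₀ ≤ 1 := by
        constructor
        · by_contra hcon
          push_neg at hcon
          have h1 : n₀ ≤ -1 := by omega
          have h2 : (n₀:ℝ) ≤ -1 := by exact_mod_cast h1
          linarith
        · by_contra hcon
          push_neg at hcon
          have h1 : (2:ℤ) ≤ n₀ := by omega
          have h2 : (2:ℝ) ≤ (n₀:ℝ) := by exact_mod_cast h1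
          linarith
      have : n₀ = 0 ∨ n₀ = 1 := by omega
      rcases this with rfl | rfl
      · left; push_cast at habs; linarith
      · right; push_cast at habs; linarith
    obtain ⟨ψ, c, hψ0, hψε, hcs, hψlow, hfar, hnear⟩ :
        ∃ ψ c : ℝ, 0 ≤ ψ ∧ ψ ≤ ε/2 ∧ (c = 0 ∨ c = 1/2) ∧ (c = 0 → ε/(N:ℝ)^2 ≤ ψ) ∧
          (∀ k j : ℤ, k % 2 = 1 →
            (∀ n : ℤ, ε/4 < |ψ * ((k*(2*j+k) : ℤ):ℝ) - ((n:ℝ)+c)|) → Gp (k, j)) ∧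
          (∀ k j : ℤ, k % 2 = 1 → ¬ Gp (k, j) →
            ∃ n : ℤ, |ψ * ((k*(2*j+k):ℤ):ℝ) - ((n:ℝ)+c)| ≤ ε/4) := by
      rcases hn₀01 with hsmall | hbig
      · refine ⟨θ, 0, by linarith, by linarith, Or.inl rfl, fun _ => hθ, ?_, ?_⟩
        · intro k j hk h
          have := good_of_far (θ * ((k*(2*j+k) : ℤ):ℝ)) (ε/4) (fun n => by simpa using h n)
          simpa [hGp] using this
        · intro k j hk hbad
          simp only [hGp] at hbad
          obtain ⟨n, hn⟩ := near_of_bad _ _ hbad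
          exact ⟨n, by simpa using hn⟩
      · refine ⟨1/2 - θ, 1/2, by linarith, by linarith, Or.inr rfl, ?_, ?_, ?_⟩
        · intro hc0; norm_num at hc0
        · intro k j hk h
          obtain ⟨t, ht⟩ := odd_m k j hk
          have hmr : ((k*(2*j+k) : ℤ):ℝ) = 2*(t:ℝ)+1 := by
            rw [ht]; push_cast; ring
          have hgf : ε / 4 < Int.fract (θ * ((k*(2*j+k) : ℤ):ℝ)) ∧
              Int.fract (θ * ((k*(2*j+k) : ℤ):ℝ)) < 1 - ε/4 := by
            apply good_of_far
            intro n'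
            have h2 := h (t - n')
            have e : (1/2 - θ) * ((k*(2*j+k) : ℤ):ℝ) - (((t - n' : ℤ):ℝ) + 1/2)
                = -(θ * ((k*(2*j+k) : ℤ):ℝ) - (n':ℝ)) := by
              rw [hmr]; push_cast; ring
            rw [e, abs_neg] at h2
            exact h2
          simpa [hGp] using hgf
        · intro k j hk hbad
          simp only [hGp] at hbad
          obtain ⟨n', hn'⟩ := near_of_bad _ _ hbad
          obtain ⟨t, ht⟩ := odd_m k j hk
          have hmr : ((k*(2*j+k) : ℤ):ℝ) = 2*(t:ℝ)+1 := by rw [ht]; push_cast; ring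
          refine ⟨t - n', ?_⟩
          have e : (1/2 - θ) * ((k*(2*j+k) : ℤ):ℝ) - (((t - n' : ℤ):ℝ) + 1/2)
              = -(θ * ((k*(2*j+k) : ℤ):ℝ) - (n':ℝ)) := by rw [hmr]; push_cast; ring
          rw [e, abs_neg]
          exact hn'
    set oddK := K.filter (fun k => k % 2 = 1) with hoddK
    have hoddcard : (N:ℝ) ≤ (oddK.card : ℝ) := by
      rw [hoddK, hK]; exact odd_card_lower N (by omega)
    by_cases hA : ψ ≤ 1/(60*(N:ℝ)^2)
    · -- Case A: all odd pairs good
      have hallgood : ∀ j ∈ J, ∀ k ∈ oddK, Gp (k, j) := by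
        intro j hj k hk
        simp only [hoddK, hK, Finset.mem_filter, Finset.mem_Icc] at hk
        simp only [hJ, Finset.mem_Icc] at hj
        apply hfar k j hk.2
        intro n
        set mr := ((k*(2*j+k) : ℤ):ℝ) with hmrdef
        have hm := m_bounds N hN k j hk.1.1 hk.1.2 hj.1 hj.2
        rw [← hmrdef] at hm
        have hψm0 : 0 ≤ ψ * mr := mul_nonneg hψ0 (by nlinarith [hm.1])
        have hψmu : ψ * mr ≤ 9/20 := by
          have h1 : ψ * mr ≤ ψ * (27*(N:ℝ)^2) := mul_le_mul_of_nonneg_left hm.2 hψ0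
          have h2 : ψ * (27*(N:ℝ)^2) ≤ (1/(60*(N:ℝ)^2)) * (27*(N:ℝ)^2) :=
            mul_le_mul_of_nonneg_right hA (by positivity)
          have h3 : (1/(60*(N:ℝ)^2)) * (27*(N:ℝ)^2) = 9/20 := by
            field_simp; ring
          linarith
        rcases hcs with hc0 | hc12
        · subst hc0
          have hψl : ε/(N:ℝ)^2 ≤ ψ := hψlow rfl
          have h5ε : 5*ε ≤ ψ * mr := by
            have h1 : (ε/(N:ℝ)^2) * (5*(N:ℝ)^2) ≤ ψ * (5*(N:ℝ)^2) :=
              mul_le_mul_of_nonneg_right hψl (by positivity)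
            have h2 : ψ * (5*(N:ℝ)^2) ≤ ψ * mr := mul_le_mul_of_nonneg_left hm.1 hψ0
            have h3 : (ε/(N:ℝ)^2) * (5*(N:ℝ)^2) = 5*ε := by field_simp
            linarith
          rcases le_or_gt n 0 with hn | hn
          · have hnr : (n:ℝ) ≤ 0 := by exact_mod_cast hn
            calc ε/4 < 5*ε - 0 := by linarith
              _ ≤ ψ*mr - ((n:ℝ)+0) := by linarith
              _ ≤ |ψ*mr - ((n:ℝ)+0)| := le_abs_self _
          · have hnr : (1:ℝ) ≤ (n:ℝ) := by exact_mod_cast hn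
            calc ε/4 < 11/20 := by linarith
              _ ≤ ((n:ℝ)+0) - ψ*mr := by linarith
              _ ≤ |ψ*mr - ((n:ℝ)+0)| := by rw [abs_sub_comm]; exact le_abs_self _
        · subst hc12
          rcases le_or_gt n (-1) with hn | hn
          · have hnr : (n:ℝ) ≤ -1 := by exact_mod_cast hn
            calc ε/4 < 1/2 := by linarith
              _ ≤ ψ*mr - ((n:ℝ)+1/2) := by linarith
              _ ≤ |ψ*mr - ((n:ℝ)+1/2)| := le_abs_self _
          · have hn' : (0:ℤ) ≤ n := by omega
            have hnr : (0:ℝ) ≤ (n:ℝ) := by exact_mod_cast hn'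
            calc ε/4 < 1/20 := by linarith
              _ ≤ ((n:ℝ)+1/2) - ψ*mr := by linarith
              _ ≤ |ψ*mr - ((n:ℝ)+1/2)| := by rw [abs_sub_comm]; exact le_abs_self _
      have hmain := pairs_lower' K J Gp J (subset_refl J) (fun _ => oddK)
        (fun _ _ => Finset.filter_subset _ _) (fun j hj k hk => hallgood j hj k hk)
        ((N:ℝ)) (fun j _ => hoddcard)
      rw [hJcard] at hmain
      nlinarith
    · push_neg at hA
      have hψpos : 0 < ψ := lt_trans (by positivity) hA
      have hu1 : 1 < ψ * (60*(N:ℝ)^2) := (div_lt_iff₀ (by positivity)).1 hA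
      by_cases hB1 : ψ ≤ 1/(48*(N:ℝ))
      · -- Case B1
        have hu2 : ψ * (48*(N:ℝ)) ≤ 1 := (le_div_iff₀ (by positivity)).1 hB1
        have hBj : ∀ j ∈ J, (N:ℝ) - (22*ψ*(N:ℝ)^2 + ε/2 + 1) * (ε/(24*ψ*(N:ℝ)) + 1)
            ≤ ((oddK.filter (fun k => Gp (k, j))).card : ℝ) := by
          intro j hj
          simp only [hJ, Finset.mem_Icc] at hj
          have := b1count N hN ε ψ c hε hψpos j hj.1 hj.2 (fun k => Gp (k, j))
            (fun k _ _ hk3 hbad => hnear k j hk3 hbad)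
          rw [hoddK, hK]
          exact this
        have hmain := pairs_lower' K J Gp J (subset_refl J)
          (fun j => oddK.filter (fun k => Gp (k, j)))
          (fun j _ => (Finset.filter_subset _ _).trans (Finset.filter_subset _ _))
          (fun j _ k hk => (Finset.mem_filter.1 hk).2)
          _ hBj
        rw [hJcard] at hmain
        have hkey : (22*ψ*(N:ℝ)^2 + ε/2 + 1) * (ε/(24*ψ*(N:ℝ)) + 1) ≤ 7*(N:ℝ)/8 :=
          b1numeric (N:ℝ) ψ ε hN4 hε hε' hψpos hu1 hu2
        have h9 : (N:ℝ)/8 ≤ (N:ℝ) - (22*ψ*(N:ℝ)^2 + ε/2 + 1) * (ε/(24*ψ*(N:ℝ)) + 1) := by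
          linarith
        have h10 : ((N:ℝ)+1)*((N:ℝ)/8)
            ≤ ((N:ℝ)+1)*((N:ℝ) - (22*ψ*(N:ℝ)^2 + ε/2 + 1) * (ε/(24*ψ*(N:ℝ)) + 1)) :=
          mul_le_mul_of_nonneg_left h9 (by positivity)
        nlinarith [hmain, h10]
      · push_neg at hB1
        have hu2 : 1 < ψ * (48*(N:ℝ)) := (div_lt_iff₀ (by positivity)).1 hB1
        set Pψ : ℤ → Prop := fun k => ∀ n : ℤ, ε/2 < |2*ψ*(k:ℝ) - (n:ℝ)| with hPψ
        set goodKψ := oddK.filter Pψ with hgoodKψ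
        set badKψ := oddK.filter (fun k => ¬ Pψ k) with hbadKψ
        have htotK : (goodKψ.card) + (badKψ.card) = oddK.card :=
          Finset.card_filter_add_card_filter_not (p := Pψ)
        have hjcc : ∀ k ∈ goodKψ, (N:ℝ)/2 ≤ ((J.filter (fun j => Gp (k, j))).card : ℝ) := by
          intro k hk
          simp only [hgoodKψ, hoddK, Finset.mem_filter] at hk
          exact jcount N hN ε ψ c k (fun j => Gp (k, j))
            (fun j _ _ hbad => hnear k j hk.1.2 hbad)
            hk.2
        have hmain := pairs_lower K J Gp goodKψ
          (by rw [hgoodKψ, hoddK]; exact (Finset.filter_subset _ _).trans (Finset.filter_subset _ _))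
          (fun k => J.filter (fun j => Gp (k, j)))
          (fun k _ => Finset.filter_subset _ _)
          (fun k _ j hj => (Finset.mem_filter.1 hj).2)
          ((N:ℝ)/2) hjcc
        by_cases hB2 : ψ < 8*ε/(N:ℝ)
        · -- Case B2 : all bad k near n = 1
          have huN : ψ*(N:ℝ) < 8*ε := (lt_div_iff₀ hN0).1 hB2
          have hbadnear1 : ∀ x ∈ badKψ, |2*ψ*(x:ℝ) - 1| ≤ ε/2 := by
            intro x hx
            simp only [hbadKψ, hoddK, hK, Finset.mem_filter, Finset.mem_Icc, hPψ] at hx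
            obtain ⟨⟨⟨hx1, hx2⟩, hx3⟩, hx4⟩ := hx
            push_neg at hx4
            obtain ⟨n, hn⟩ := hx4
            have hxr1 : (N:ℝ) ≤ (x:ℝ) := by exact_mod_cast hx1
            have hxr2 : (x:ℝ) ≤ 3*(N:ℝ) := by exact_mod_cast hx2
            have hlow : 1/24 < 2*ψ*(x:ℝ) := by nlinarith
            have hup : 2*ψ*(x:ℝ) < 3/2 := by nlinarith
            have habs := abs_le.1 hn
            have hn1 : n = 1 := by
              have h1 : (0:ℝ) < (n:ℝ) := by linarith
              have h2 : (n:ℝ) < 2 := by linarith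
              have h3 : (0:ℤ) < n := by exact_mod_cast h1
              have h4 : n < 2 := by exact_mod_cast h2
              omega
            rw [hn1] at hn
            push_cast at hn
            exact hn
          have hbadcard : (badKψ.card : ℝ) ≤ 12*ε*(N:ℝ) + 1 := by
            have hsc := sep_card badKψ (24*ε*(N:ℝ)) (by positivity) ?_ ?_
            · calc (badKψ.card : ℝ) ≤ (24*ε*(N:ℝ))/2 + 1 := hsc
                _ = 12*ε*(N:ℝ) + 1 := by ring
            · intro x hx y hy hxy
              have hox : x % 2 = 1 := by
                have := (Finset.mem_filter.1 hx).1
                exact (Finset.mem_filter.1 this).2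
              have hoy : y % 2 = 1 := by
                have := (Finset.mem_filter.1 hy).1
                exact (Finset.mem_filter.1 this).2
              rcases abs_cases (x - y) with ⟨he, _⟩ | ⟨he, _⟩ <;> omega
            · intro x hx y hy
              have h1 := hbadnear1 x hx
              have h2 := hbadnear1 y hy
              have habs1 := abs_le.1 h1
              have habs2 := abs_le.1 h2
              have hle : 2*ψ*((x:ℝ) - (y:ℝ)) ≤ ε := by nlinarith
              have h2ψ : (0:ℝ) < 2*ψ := by linarith
              have hq : 2*ψ*((x:ℝ) - (y:ℝ)) ≤ 2*ψ*(24*ε*(N:ℝ)) := by nlinarith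
              exact le_of_mul_le_mul_left hq h2ψ
          have hgoodc : (N:ℝ) - 12*ε*(N:ℝ) - 1 ≤ (goodKψ.card : ℝ) := by
            have hcast : (goodKψ.card : ℝ) + (badKψ.card : ℝ) = (oddK.card : ℝ) := by
              exact_mod_cast congrArg (Nat.cast (R := ℝ)) htotK
            linarith
          have hg2 : ((N:ℝ) - 12*ε*(N:ℝ) - 1) * ((N:ℝ)/2) ≤ ((goodKψ.card : ℝ)) * ((N:ℝ)/2) :=
            mul_le_mul_of_nonneg_right hgoodc (by positivity)
          nlinarith [hmain, hg2]
        · -- Case B3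
          push_neg at hB2
          have huN : 8*ε ≤ ψ*(N:ℝ) := by
            have := (div_le_iff₀ hN0).1 hB2
            linarith
          set M : ℤ := ⌊6*ψ*(N:ℝ) + ε/2⌋ with hM
          set T' : ℤ → Finset ℤ := fun n => oddK.filter (fun k => |2*ψ*(k:ℝ) - (n:ℝ)| ≤ ε/2) with hT'
          have hsub : badKψ ⊆ (Finset.Icc 1 M).biUnion T' := by
            intro x hx
            simp only [hbadKψ, hoddK, hK, Finset.mem_filter, Finset.mem_Icc, hPψ] at hx
            obtain ⟨⟨⟨hx1, hx2⟩, hx3⟩, hx4⟩ := hx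
            push_neg at hx4
            obtain ⟨n, hn⟩ := hx4
            have hxr1 : (N:ℝ) ≤ (x:ℝ) := by exact_mod_cast hx1
            have hxr2 : (x:ℝ) ≤ 3*(N:ℝ) := by exact_mod_cast hx2
            have habs := abs_le.1 hn
            have hl : (0:ℝ) < (n:ℝ) := by nlinarith
            have hr : (n:ℝ) ≤ 6*ψ*(N:ℝ) + ε/2 := by nlinarith
            refine Finset.mem_biUnion.2 ⟨n, Finset.mem_Icc.2 ⟨?_, ?_⟩, ?_⟩
            · exact_mod_cast hl
            · exact Int.le_floor.2 hr
            · simp only [hT', hoddK, hK, Finset.mem_filter, Finset.mem_Icc]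
              exact ⟨⟨⟨hx1, hx2⟩, hx3⟩, hn⟩
          have hper : ∀ n ∈ Finset.Icc (1:ℤ) M, ((T' n).card : ℝ) ≤ ε/(4*ψ) + 1 := by
            intro n _
            have hsc := sep_card (T' n) (ε/(2*ψ)) (by positivity) ?_ ?_
            · calc ((T' n).card : ℝ) ≤ (ε/(2*ψ))/2 + 1 := hsc
                _ = ε/(4*ψ) + 1 := by ring
            · intro x hx y hy hxy
              have hox : x % 2 = 1 := by
                have := (Finset.mem_filter.1 hx).1
                exact (Finset.mem_filter.1 this).2
              have hoy : y % 2 = 1 := by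
                have := (Finset.mem_filter.1 hy).1
                exact (Finset.mem_filter.1 this).2
              rcases abs_cases (x - y) with ⟨he, _⟩ | ⟨he, _⟩ <;> omega
            · intro x hx y hy
              have h1 := abs_le.1 (Finset.mem_filter.1 hx).2
              have h2 := abs_le.1 (Finset.mem_filter.1 hy).2
              have h2ψ : (0:ℝ) < 2*ψ := by linarith
              have hq : 2*ψ*((x:ℝ) - (y:ℝ)) ≤ 2*ψ*(ε/(2*ψ)) := by
                have he : 2*ψ*(ε/(2*ψ)) = ε := by field_simp
                rw [he]; linarith
              exact le_of_mul_le_mul_left hq h2ψ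
          have hIccM : ((Finset.Icc (1:ℤ) M).card : ℝ) ≤ 6*ψ*(N:ℝ) + ε/2 := by
            rw [Int.card_Icc]
            have hM0 : (0:ℤ) ≤ M := Int.floor_nonneg.2 (by positivity)
            have h5 : ((M + 1 - 1).toNat : ℤ) = M := by omega
            have h6 : ((M + 1 - 1).toNat : ℝ) = (M:ℝ) := by
              exact_mod_cast congrArg (fun z : ℤ => (z:ℝ)) h5
            rw [h6]
            exact Int.floor_le _
          have hbadcard : (badKψ.card : ℝ) ≤ (6*ψ*(N:ℝ) + ε/2) * (ε/(4*ψ) + 1) := by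
            have h1 : badKψ.card ≤ ((Finset.Icc 1 M).biUnion T').card := Finset.card_le_card hsub
            have h2 : ((Finset.Icc 1 M).biUnion T').card ≤ ∑ n ∈ Finset.Icc (1:ℤ) M, (T' n).card :=
              Finset.card_biUnion_le
            have h3 : ((∑ n ∈ Finset.Icc (1:ℤ) M, (T' n).card : ℕ) : ℝ)
                ≤ ((Finset.Icc (1:ℤ) M).card : ℝ) * (ε/(4*ψ) + 1) := by
              push_cast
              calc ∑ n ∈ Finset.Icc (1:ℤ) M, ((T' n).card : ℝ)
                  ≤ ∑ _n ∈ Finset.Icc (1:ℤ) M, (ε/(4*ψ) + 1) := Finset.sum_le_sum hper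
                _ = ((Finset.Icc (1:ℤ) M).card : ℝ) * (ε/(4*ψ) + 1) := by
                    rw [Finset.sum_const]; ring
            have h4 : ((Finset.Icc (1:ℤ) M).card : ℝ) * (ε/(4*ψ) + 1)
                ≤ (6*ψ*(N:ℝ) + ε/2) * (ε/(4*ψ) + 1) :=
              mul_le_mul_of_nonneg_right hIccM (by positivity)
            calc (badKψ.card : ℝ) ≤ ((∑ n ∈ Finset.Icc (1:ℤ) M, (T' n).card : ℕ) : ℝ) := by
                  exact_mod_cast le_trans h1 h2
              _ ≤ ((Finset.Icc (1:ℤ) M).card : ℝ) * (ε/(4*ψ) + 1) := h3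
              _ ≤ _ := h4
          have hRB3 : (6*ψ*(N:ℝ) + ε/2) * (ε/(4*ψ) + 1) ≤ (N:ℝ)/2 :=
            b3numeric (N:ℝ) ψ ε hN4 hε hε' hψpos hψε huN
          have hgoodc : (N:ℝ)/2 ≤ (goodKψ.card : ℝ) := by
            have hcast : (goodKψ.card : ℝ) + (badKψ.card : ℝ) = (oddK.card : ℝ) := by
              exact_mod_cast congrArg (Nat.cast (R := ℝ)) htotK
            linarith
          have hg2 : ((N:ℝ)/2) * ((N:ℝ)/2) ≤ ((goodKψ.card : ℝ)) * ((N:ℝ)/2) :=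
            mul_le_mul_of_nonneg_right hgoodc (by positivity)
          nlinarith [hmain, hg2]
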